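/- (Theorem 3(ii), exactness on coordinate subspaces) Let g : ℝ^m → ℝ lie in H, let p ∈ ℝ^m, and let L be an integer with 1 ≤ L ≤ m. Let Q_L be the set of q ∈ {−2π/3, 0, 2π/3}^m with at most L non-zero entries, and define g̃ : ℝ^m → ℝ by g̃(θ) = Σ_{q ∈ Q_L} g(p + q)·K̃(p + q, θ). Then for every ϑ ∈ ℝ^m having at most L non-zero entries, g̃(p + ϑ) = g(p + ϑ). -/

import Mathlib

open MeasureTheory Real Finset

noncomputable section

/-- `Ω = {-1,0,1}^m` as a finite set of integer vectors. -/
def Omega (m : ℕ) : Finset (Fin m → ℤ) := Finset.Icc (-1) 1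

/-- `ωᵀz = ∑ j, ω j * z j`. -/
def dotIZ {m : ℕ} (ω : Fin m → ℤ) (z : Fin m → ℝ) : ℝ := ∑ j, (ω j : ℝ) * z j

/-- A function `g : ℝ^m → ℝ` lies in `H` if it has a Fourier representation with
frequencies in `Ω = {-1,0,1}^m` and coefficients satisfying `c (-ω) = conj (c ω)`. -/
def IsInH (m : ℕ) (g : (Fin m → ℝ) → ℝ) : Prop :=
  ∃ c : (Fin m → ℤ) → ℂ,
    (∀ ω ∈ Omega m, c (-ω) = starRingEnd ℂ (c ω)) ∧
    ∀ z : Fin m → ℝ, (g z : ℂ) =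
      ∑ ω ∈ Omega m, c ω * Complex.exp (Complex.I * ((dotIZ ω z : ℝ) : ℂ))

/-- The kernel `K̃(x,z) = ∏ j, (1 + 2 cos (x j - z j)) / 3`. -/
def Ktilde (m : ℕ) (x z : Fin m → ℝ) : ℝ :=
  ∏ j, (1 + 2 * Real.cos (x j - z j)) / 3

/-- The grid `Q = {-2π/3, 0, 2π/3}^m` as a finite set of real vectors. -/
def Qgrid (m : ℕ) : Finset (Fin m → ℝ) :=
  (Omega m).image (fun ω j => 2 * π / 3 * (ω j : ℝ))

/-- The set of points of `Q` having at most `L` non-zero entries. -/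
def QgridL (m L : ℕ) : Finset (Fin m → ℝ) :=
  (Qgrid m).filter (fun q => (Finset.univ.filter (fun j => q j ≠ 0)).card ≤ L)

/-- The cube `[-π, π]^m`. -/
def cube (m : ℕ) : Set (Fin m → ℝ) := Set.pi Set.univ fun _ : Fin m => Set.Icc (-π) π

def qmap (m : ℕ) (ω : Fin m → ℤ) : Fin m → ℝ := fun j => 2 * π / 3 * (ω j : ℝ)

/-- shorthand for `exp(i r)` for real `r`. -/
def cexp (r : ℝ) : ℂ := Complex.exp (Complex.I * (r : ℂ))

lemma cexp_add (a b : ℝ) : cexp (a + b) = cexp a * cexp b := by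
  rw [cexp, cexp, cexp, ← Complex.exp_add]
  congr 1
  push_cast
  ring

lemma omega_eq_pi (m : ℕ) : Omega m = Fintype.piFinset fun _ => Finset.Icc (-1:ℤ) 1 := by
  rw [Omega, Pi.Icc_eq]; rfl

lemma mem_omega {m : ℕ} {ω : Fin m → ℤ} : ω ∈ Omega m ↔ ∀ j, ω j ∈ Finset.Icc (-1:ℤ) 1 := by
  rw [omega_eq_pi, Fintype.mem_piFinset]

lemma cos_int (d : ℤ) (hd : d ∈ Finset.Icc (-2:ℤ) 2) :
    1 + 2 * Real.cos (d * (2 * π / 3)) = if d = 0 then 3 else 0 := by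
  have h23 : Real.cos (2 * π / 3) = -(1/2) := by
    have : (2:ℝ) * π / 3 = π - π / 3 := by ring
    rw [this, Real.cos_pi_sub, Real.cos_pi_div_three]
  have h43 : Real.cos (2 * (2 * π / 3)) = -(1/2) := by
    have : (2:ℝ) * (2 * π / 3) = π / 3 + π := by ring
    rw [this, Real.cos_add_pi, Real.cos_pi_div_three]
  rw [Finset.mem_Icc] at hd
  obtain ⟨h1, h2⟩ := hd
  interval_cases d
  · norm_num [show ((-2:ℤ):ℝ) * (2*π/3) = -(2*(2*π/3)) by push_cast; ring, Real.cos_neg, h43]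
  · norm_num [show ((-1:ℤ):ℝ) * (2*π/3) = -(2*π/3) by push_cast; ring, Real.cos_neg, h23]
  · norm_num
  · norm_num [show ((1:ℤ):ℝ) * (2*π/3) = (2*π/3) by push_cast; ring, h23]
  · norm_num [show ((2:ℤ):ℝ) * (2*π/3) = 2*(2*π/3) by push_cast; ring, h43]

lemma sum_exp (t : ℝ) :
    ∑ s ∈ Finset.Icc (-1:ℤ) 1, cexp ((s : ℝ) * t)
      = ((1 + 2 * Real.cos t : ℝ) : ℂ) := by
  rw [show Finset.Icc (-1:ℤ) 1 = ({-1,0,1} : Finset ℤ) from by decide,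
      Finset.sum_insert (by decide), Finset.sum_insert (by decide), Finset.sum_singleton]
  simp only [cexp]
  push_cast
  rw [show Complex.I * (-1 * (t:ℂ)) = -((t:ℂ) * Complex.I) by ring,
      show Complex.I * (0 * (t:ℂ)) = 0 by ring,
      show Complex.I * (1 * (t:ℂ)) = (t:ℂ) * Complex.I by ring,
      Complex.exp_zero, Complex.cos]
  ring

lemma exp_dot {m : ℕ} (d : Fin m → ℤ) (z : Fin m → ℝ) :
    cexp (dotIZ d z) = ∏ j, cexp ((d j : ℝ) * z j) := by
  simp only [cexp]
  rw [← Complex.exp_sum]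
  congr 1
  rw [dotIZ]
  push_cast
  rw [Finset.mul_sum]

lemma ortho {m : ℕ} (d : Fin m → ℤ) (hd : ∀ j, d j ∈ Finset.Icc (-2:ℤ) 2) :
    ∑ σ ∈ Omega m, cexp (dotIZ d (qmap m σ))
      = if d = 0 then (3:ℂ)^m else 0 := by
  have h1 : ∀ σ : Fin m → ℤ, cexp (dotIZ d (qmap m σ))
      = ∏ j, cexp ((σ j : ℝ) * ((d j : ℝ) * (2 * π / 3))) := by
    intro σ
    rw [exp_dot]
    simp only [qmap]
    exact Finset.prod_congr rfl fun j _ => by rw [show (d j : ℝ) * (2 * π / 3 * (σ j:ℝ)) = (σ j : ℝ) * ((d j : ℝ) * (2*π/3)) by ring]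
  simp_rw [h1]
  rw [omega_eq_pi]
  rw [← Finset.prod_univ_sum (fun _ : Fin m => Finset.Icc (-1:ℤ) 1)
      (fun j s => cexp ((s:ℝ) * ((d j : ℝ) * (2 * π / 3))))]
  have h2 : ∀ j, ∑ s ∈ Finset.Icc (-1:ℤ) 1, cexp ((s:ℝ) * ((d j : ℝ) * (2*π/3)))
      = if d j = 0 then (3:ℂ) else 0 := by
    intro j
    rw [sum_exp, show ((d j : ℝ) * (2*π/3)) = ((d j : ℝ) * (2*π/3)) from rfl, cos_int _ (hd j)]
    split <;> norm_num
  rw [Finset.prod_congr rfl fun j _ => h2 j]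
  by_cases h : d = 0
  · subst h; simp
  · obtain ⟨j, hj⟩ := Function.ne_iff.mp h
    rw [if_neg h]
    exact Finset.prod_eq_zero (Finset.mem_univ j) (by simpa using hj)

lemma ktilde_expand (m : ℕ) (x z : Fin m → ℝ) :
    ((Ktilde m x z : ℝ) : ℂ) = ∑ σ ∈ Omega m, (1/3:ℂ)^m * cexp (dotIZ σ (x - z)) := by
  have h1 : ∀ j : Fin m, (((1 + 2 * Real.cos (x j - z j)) / 3 : ℝ) : ℂ)
      = ∑ s ∈ Finset.Icc (-1:ℤ) 1, (1/3:ℂ) * cexp ((s:ℝ) * (x j - z j)) := by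
    intro j
    rw [← Finset.mul_sum, sum_exp]
    push_cast
    ring
  rw [Ktilde, Complex.ofReal_prod]
  rw [Finset.prod_congr rfl fun j _ => h1 j,
      Finset.prod_univ_sum (fun _ : Fin m => Finset.Icc (-1:ℤ) 1)
      (fun j s => (1/3:ℂ) * cexp ((s:ℝ) * (x j - z j))), ← omega_eq_pi]
  refine Finset.sum_congr rfl fun σ _ => ?_
  rw [Finset.prod_mul_distrib, Finset.prod_const, exp_dot, Finset.card_univ, Fintype.card_fin]
  simp [Pi.sub_apply]

lemma cexp_sub (a b : ℝ) : cexp (a - b) = cexp a * (cexp b)⁻¹ := by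
  rw [show a - b = a + -b by ring, cexp_add]
  congr 1
  rw [cexp, cexp, ← Complex.exp_neg]
  congr 1
  push_cast
  ring

lemma cexp_ne_zero (a : ℝ) : cexp a ≠ 0 := Complex.exp_ne_zero _

lemma dot_add_right {m : ℕ} (ω : Fin m → ℤ) (x z : Fin m → ℝ) :
    dotIZ ω (x + z) = dotIZ ω x + dotIZ ω z := by
  simp [dotIZ, Pi.add_apply, mul_add, Finset.sum_add_distrib]

lemma dot_sub_right {m : ℕ} (ω : Fin m → ℤ) (x z : Fin m → ℝ) :
    dotIZ ω (x - z) = dotIZ ω x - dotIZ ω z := by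
  simp [dotIZ, Pi.sub_apply, mul_sub, Finset.sum_sub_distrib]

lemma dot_add_left {m : ℕ} (ω σ : Fin m → ℤ) (z : Fin m → ℝ) :
    dotIZ (ω + σ) z = dotIZ ω z + dotIZ σ z := by
  simp only [dotIZ, Pi.add_apply, ← Finset.sum_add_distrib]
  refine Finset.sum_congr rfl fun j _ => ?_
  push_cast
  ring

lemma dot_neg {m : ℕ} (ω : Fin m → ℤ) (z : Fin m → ℝ) :
    dotIZ (-ω) z = -dotIZ ω z := by
  simp [dotIZ, Pi.neg_apply, Finset.sum_neg_distrib]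

lemma neg_mem_omega {m : ℕ} {ω : Fin m → ℤ} (hω : ω ∈ Omega m) : -ω ∈ Omega m := by
  rw [mem_omega] at hω ⊢
  intro j
  have := hω j
  rw [Finset.mem_Icc] at this ⊢
  simp only [Pi.neg_apply]
  omega

lemma step3 (c3 : ℂ) (a1 a2 b1 b2 : ℝ) :
    cexp (a1 + a2) * (c3 * cexp (b1 - b2)) = c3 * cexp (a1 - b2) * cexp (a2 + b1) := by
  rw [cexp_add, cexp_sub, cexp_sub, cexp_add]
  field_simp

lemma reproduce {m : ℕ} (ω : Fin m → ℤ) (hω : ω ∈ Omega m) (p ϑ : Fin m → ℝ) :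
    ∑ σ ∈ Omega m, cexp (dotIZ ω (p + qmap m σ)) * ((Ktilde m (p + qmap m σ) (p + ϑ) : ℝ) : ℂ)
      = cexp (dotIZ ω (p + ϑ)) := by
  have hsub : ∀ σ : Fin m → ℤ, (p + qmap m σ) - (p + ϑ) = qmap m σ - ϑ := by
    intro σ; funext j; simp only [Pi.sub_apply, Pi.add_apply]; ring
  have hterm : ∀ σ ∈ Omega m, cexp (dotIZ ω (p + qmap m σ)) * ((Ktilde m (p + qmap m σ) (p + ϑ) : ℝ) : ℂ)
      = ∑ τ ∈ Omega m, (1/3:ℂ)^m * cexp (dotIZ ω p - dotIZ τ ϑ) * cexp (dotIZ (ω + τ) (qmap m σ)) := by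
    intro σ _
    rw [ktilde_expand, hsub σ, Finset.mul_sum]
    refine Finset.sum_congr rfl fun τ _ => ?_
    rw [dot_add_right, dot_sub_right, dot_add_left]
    exact step3 _ _ _ _ _
  rw [Finset.sum_congr rfl hterm, Finset.sum_comm]
  have hinner : ∀ τ ∈ Omega m,
      ∑ σ ∈ Omega m, (1/3:ℂ)^m * cexp (dotIZ ω p - dotIZ τ ϑ) * cexp (dotIZ (ω + τ) (qmap m σ))
      = (1/3:ℂ)^m * cexp (dotIZ ω p - dotIZ τ ϑ) * (if ω + τ = 0 then (3:ℂ)^m else 0) := by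
    intro τ hτ
    rw [← Finset.mul_sum, ortho]
    intro j
    have h1 := mem_omega.mp hω j
    have h2 := mem_omega.mp hτ j
    rw [Finset.mem_Icc] at h1 h2 ⊢
    simp only [Pi.add_apply]
    omega
  rw [Finset.sum_congr rfl hinner]
  rw [Finset.sum_eq_single_of_mem (-ω) (neg_mem_omega hω)]
  · rw [if_pos (by simp), dot_neg, dot_add_right]
    rw [show dotIZ ω p - -dotIZ ω ϑ = dotIZ ω p + dotIZ ω ϑ by ring]
    rw [mul_comm, ← mul_assoc, show (3:ℂ)^m * (1/3)^m = 1 by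
      rw [one_div, inv_pow, mul_inv_cancel₀ (pow_ne_zero m (by norm_num))], one_mul]
  · intro τ _ hτ
    rw [if_neg (fun h => hτ (eq_neg_of_add_eq_zero_right h)), mul_zero]

theorem stmt_13 (m : ℕ) (g : (Fin m → ℝ) → ℝ) (hg : IsInH m g)
    (p : Fin m → ℝ) (L : ℕ) (hL : 1 ≤ L) (hLm : L ≤ m)
    (ϑ : Fin m → ℝ) (hϑ : (Finset.univ.filter (fun j => ϑ j ≠ 0)).card ≤ L) :
    ∑ q ∈ QgridL m L, g (p + q) * Ktilde m (p + q) (p + ϑ) = g (p + ϑ) := by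
  have hπ : (2 * π / 3 : ℝ) ≠ 0 := by positivity
  have hq0 : ∀ (ω : Fin m → ℤ) (j : Fin m), qmap m ω j ≠ 0 ↔ ω j ≠ 0 := by
    intro ω j
    simp [qmap, mul_eq_zero, hπ]
  have hQL : QgridL m L
      = ((Omega m).filter (fun ω => ((Finset.univ.filter fun j => ω j ≠ 0)).card ≤ L)).image
        (qmap m) := by
    rw [QgridL, Qgrid, Finset.filter_image]
    congr 1
    refine Finset.filter_congr fun ω _ => ?_
    beta_reduce
    rw [Finset.filter_congr fun j _ =>
      (show 2 * π / 3 * ((ω j : ℝ)) ≠ 0 ↔ ω j ≠ 0 from hq0 ω j)]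
  have hinjOn : ∀ a ∈ (Omega m).filter
      (fun ω => ((Finset.univ.filter fun j => ω j ≠ 0)).card ≤ L),
      ∀ b ∈ (Omega m).filter (fun ω => ((Finset.univ.filter fun j => ω j ≠ 0)).card ≤ L),
      qmap m a = qmap m b → a = b := by
    intro a _ b _ hab
    funext j
    have h := congrFun hab j
    simp only [qmap] at h
    exact_mod_cast mul_left_cancel₀ hπ h
  rw [hQL, Finset.sum_image hinjOn,
    Finset.sum_subset (Finset.filter_subset _ _) ?vanish]
  case vanish =>
    intro ω hω hnot
    have hcard : L < ((Finset.univ.filter fun j => ω j ≠ 0)).card := by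
      by_contra h
      push_neg at h
      exact hnot (Finset.mem_filter.mpr ⟨hω, h⟩)
    have hex : ∃ j, ω j ≠ 0 ∧ ϑ j = 0 := by
      by_contra hcon
      push_neg at hcon
      have hsubs : (Finset.univ.filter fun j => ω j ≠ 0)
          ⊆ (Finset.univ.filter fun j => ϑ j ≠ 0) := by
        intro j hj
        rw [Finset.mem_filter] at hj ⊢
        exact ⟨hj.1, hcon j hj.2⟩
      have := Finset.card_le_card hsubs
      omega
    obtain ⟨j, hj1, hj2⟩ := hex
    have hker : Ktilde m (p + qmap m ω) (p + ϑ) = 0 := by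
      rw [Ktilde]
      refine Finset.prod_eq_zero (Finset.mem_univ j) ?_
      have harg : (p + qmap m ω) j - (p + ϑ) j = (ω j : ℝ) * (2 * π / 3) := by
        simp only [Pi.add_apply, qmap, hj2]
        ring
      rw [harg, cos_int (ω j) ?_, if_neg hj1]
      · norm_num
      · have := mem_omega.mp hω j
        rw [Finset.mem_Icc] at this ⊢
        omega
    rw [hker, mul_zero]
  · obtain ⟨c, -, hgc⟩ := hg
    have key : ((∑ ω ∈ Omega m, g (p + qmap m ω) * Ktilde m (p + qmap m ω) (p + ϑ) : ℝ) : ℂ)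
        = ((g (p + ϑ) : ℝ) : ℂ) := by
      push_cast
      rw [hgc (p + ϑ)]
      have hterm : ∀ σ ∈ Omega m,
          (g (p + qmap m σ) : ℂ) * ((Ktilde m (p + qmap m σ) (p + ϑ) : ℝ) : ℂ)
          = ∑ ω ∈ Omega m,
            c ω * (cexp (dotIZ ω (p + qmap m σ)) * ((Ktilde m (p + qmap m σ) (p + ϑ) : ℝ) : ℂ)) := by
        intro σ _
        rw [hgc (p + qmap m σ), Finset.sum_mul]
        exact Finset.sum_congr rfl fun ω _ => by rw [mul_assoc]; rfl
      rw [Finset.sum_congr rfl hterm, Finset.sum_comm]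
      refine Finset.sum_congr rfl fun ω hω => ?_
      rw [← Finset.mul_sum, reproduce ω hω p ϑ]
      rfl
    exact_mod_cast key
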